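/- Let F be an abelian field of conductor f_F and K ⊆ F a subfield with K ≠ ℚ of conductor f_K. Then the restriction of the Stickelberger element satisfies N_{F/K}(θ_F) = ∏_{p | f_F, p ∤ f_K} (1 - σ_{K,p}^{-1}) · θ_K, where the product runs over primes p dividing f_F but not f_K and σ_{K,p} is the Frobenius of p in Gal(K/ℚ). -/

import Mathlib

/-- The normalized Stickelberger element `θ_F = -∑'_{0<a<f} (1/2 - a/f)·σ_a⁻¹` of an abelian
field `F` with Galois group `G` and conductor `f`, where the Artin symbol `a ↦ σ_a = (F/a)`
is encoded as a homomorphism `σ : (ZMod f)ˣ →* G`. -/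
noncomputable def stickelberger (f : ℕ) [NeZero f] {G : Type*} [CommGroup G]
    (σ : (ZMod f)ˣ →* G) : MonoidAlgebra ℚ G :=
  -∑ a : (ZMod f)ˣ,
    MonoidAlgebra.single ((σ a)⁻¹) ((1 : ℚ) / 2 - (((a : ZMod f).val : ℚ)) / (f : ℚ))

/-- `σ` is the Artin map of an abelian field whose conductor is exactly `f`: it is surjective
and does not factor through `(ZMod d)ˣ` for any proper divisor `d` of `f`. -/
def IsConductor (f : ℕ) [NeZero f] {G : Type*} [CommGroup G] (σ : (ZMod f)ˣ →* G) : Prop :=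
  Function.Surjective σ ∧
    ∀ (d : ℕ) (hd : d ∣ f), (∀ a : (ZMod f)ˣ, ZMod.unitsMap hd a = 1 → σ a = 1) → d = f

/-- The Frobenius (Artin symbol) of a rational prime `p` unramified in the abelian field with
Artin map `σ : (ZMod f)ˣ →* G` (and `1` if `p` divides `f`). -/
noncomputable def frob (f : ℕ) [NeZero f] {G : Type*} [CommGroup G] (σ : (ZMod f)ˣ →* G)
    (p : ℕ) : G :=
  if h : Nat.Coprime p f then σ (ZMod.unitOfCoprime p h) else 1

noncomputable def zunit (fK : ℕ) (p : ℕ) : (ZMod fK)ˣ :=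
  if h : Nat.Coprime p fK then ZMod.unitOfCoprime p h else 1

lemma sum_arith (fK n : ℕ) (hn : 0 < n) (hfK : 0 < fK) (c : ℕ) :
    ∑ j ∈ Finset.range n, ((1:ℚ)/2 - (c + fK*j)/(fK*n)) = 1/2 - c/fK := by
  obtain ⟨m, rfl⟩ : ∃ m, n = m + 1 := ⟨n - 1, (Nat.succ_pred_eq_of_pos hn).symm⟩
  have hgauss : (∑ j ∈ Finset.range (m+1), (j:ℚ)) = (m+1)*m/2 := by
    have h := congrArg (fun k : ℕ => (k : ℚ)) (Finset.sum_range_id_mul_two (m+1))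
    simp only [Nat.add_sub_cancel] at h
    push_cast at h
    linarith
  have hfK' : (fK:ℚ) ≠ 0 := by positivity
  have hn' : ((m:ℚ)+1) ≠ 0 := by positivity
  have : ∑ j ∈ Finset.range (m+1), ((1:ℚ)/2 - (c + fK*j)/(fK*(m+1)))
      = ∑ j ∈ Finset.range (m+1), (((1:ℚ)/2 - c/(fK*(m+1))) - (j:ℚ) * (1/(m+1))) := by
    apply Finset.sum_congr rfl
    intro j _
    push_cast
    field_simp
    ring
  rw [show ((m:ℕ)+1 : ℕ) = m+1 from rfl] at this
  push_cast at this ⊢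
  rw [this, Finset.sum_sub_distrib, Finset.sum_const, Finset.card_range, nsmul_eq_mul, ← Finset.sum_mul, hgauss]
  push_cast
  field_simp
  ring

lemma my_inner_sum (fF fK m c bv : ℕ) (hm : 0 < m) (hfK : 0 < fK) [NeZero fF]
    (hdvd : m * fK ∣ fF) (hcop : Nat.Coprime m fK)
    (hc : c < fK) (hcb : (m * c) % fK = bv) :
    ∑ a ∈ (Finset.range fF).filter (fun a => a % fK = bv ∧ m ∣ a),
      ((1:ℚ)/2 - (a:ℚ)/(fF:ℚ)) = 1/2 - (c:ℚ)/(fK:ℚ) := by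
  have hfF : 0 < fF := Nat.pos_of_ne_zero (NeZero.ne fF)
  set n := fF / (m * fK) with hn_def
  have hfF_eq : fF = m * (fK * n) := by
    rw [hn_def, ← mul_assoc, Nat.mul_div_cancel' hdvd]
  have hn : 0 < n := by
    rcases Nat.eq_zero_or_pos n with h | h
    · rw [h, mul_zero, mul_zero] at hfF_eq; omega
    · exact h
  have key : ∀ k : ℕ, m * k % fK = bv → k % fK = c := by
    intro k hmod
    have h1 : ((m : ZMod fK)) * (k : ZMod fK) = (m : ZMod fK) * (c : ZMod fK) := by
      have e1 : ((m * k : ℕ) : ZMod fK) = ((m * c : ℕ) : ZMod fK) :=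
        (ZMod.natCast_eq_natCast_iff _ _ _).mpr (by omega : (m*k) % fK = (m*c) % fK)
      push_cast at e1
      exact e1
    have hu : IsUnit (m : ZMod fK) :=
      ⟨ZMod.unitOfCoprime m hcop, ZMod.coe_unitOfCoprime m hcop⟩
    have h2 : (k : ZMod fK) = (c : ZMod fK) := hu.mul_left_cancel h1
    have h3 := congrArg ZMod.val h2
    rw [ZMod.val_natCast, ZMod.val_natCast, Nat.mod_eq_of_lt hc] at h3
    exact h3
  rw [← sum_arith fK n hn hfK c]
  apply Finset.sum_bij' (i := fun a _ => a / m / fK) (j := fun j _ => m * (c + fK * j))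
  · intro a ha
    simp only [Finset.mem_filter, Finset.mem_range] at ha ⊢
    obtain ⟨halt, -, hma⟩ := ha
    rw [Nat.div_div_eq_div_mul]
    exact Nat.div_lt_of_lt_mul (by rw [mul_assoc]; omega)
  · intro j hj
    simp only [Finset.mem_range] at hj
    simp only [Finset.mem_filter, Finset.mem_range]
    refine ⟨?_, ?_, ⟨_, rfl⟩⟩
    · have : c + fK * j < fK * n := by
        calc c + fK * j < fK + fK * j := by omega
        _ = fK * (j + 1) := by ring
        _ ≤ fK * n := Nat.mul_le_mul_left _ (by omega)
      rw [hfF_eq]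
      exact (Nat.mul_lt_mul_left hm).mpr this
    · have : m * (c + fK * j) = m * c + (m * j) * fK := by ring
      rw [this, Nat.add_mul_mod_self_right, hcb]
  · intro a ha
    simp only [Finset.mem_filter, Finset.mem_range] at ha
    obtain ⟨halt, hmod, k, rfl⟩ := ha
    have hk := key k hmod
    have h2 : m * k / m = k := Nat.mul_div_cancel_left k hm
    rw [h2]
    have h3 : c + fK * (k / fK) = k := by
      conv_rhs => rw [← Nat.mod_add_div k fK, hk]
    rw [h3]
  · intro j hj
    simp only [Finset.mem_range] at hj
    rw [Nat.mul_div_cancel_left _ hm]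
    have : (c + fK * j) / fK = j := by
      rw [Nat.add_mul_div_left _ _ hfK, Nat.div_eq_of_lt hc]
      omega
    rw [this]
  · intro a ha
    simp only [Finset.mem_filter, Finset.mem_range] at ha
    obtain ⟨halt, hmod, k, rfl⟩ := ha
    have hk := key k hmod
    have h2 : m * k / m = k := Nat.mul_div_cancel_left k hm
    rw [h2]
    have h3 : c + fK * (k / fK) = k := by
      conv_rhs => rw [← Nat.mod_add_div k fK, hk]
    have h4 : (c:ℚ) + (fK:ℚ) * ((k / fK : ℕ):ℚ) = (k:ℚ) := by
      exact_mod_cast congrArg (fun x : ℕ => (x:ℚ)) h3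
    have hm' : (m:ℚ) ≠ 0 := by positivity
    have hfKn' : (fK:ℚ) ≠ 0 := by positivity
    have hn' : (n:ℚ) ≠ 0 := by positivity
    rw [hfF_eq]
    push_cast
    rw [h4]
    field_simp

lemma my_incl_excl (B S : Finset ℕ) (hS : ∀ p ∈ S, Nat.Prime p) (f : ℕ → ℚ) :
    ∑ a ∈ B.filter (fun a => ∀ p ∈ S, ¬ p ∣ a), f a
      = ∑ T ∈ S.powerset, (-1:ℚ)^T.card * ∑ a ∈ B.filter (fun a => (∏ p ∈ T, p) ∣ a), f a := by
  have step1 : ∀ a, (if (∀ p ∈ S, ¬ p ∣ a) then f a else 0)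
      = f a * ∏ p ∈ S, ((if p ∣ a then (-1:ℚ) else 0) + 1) := by
    intro a
    by_cases h : ∀ p ∈ S, ¬ p ∣ a
    · rw [if_pos h]
      have : ∏ p ∈ S, ((if p ∣ a then (-1:ℚ) else 0) + 1) = 1 := by
        apply Finset.prod_eq_one
        intro p hp
        rw [if_neg (h p hp)]; ring
      rw [this, mul_one]
    · rw [if_neg h]
      push_neg at h
      obtain ⟨p, hp, hpa⟩ := h
      have : ∏ p ∈ S, ((if p ∣ a then (-1:ℚ) else 0) + 1) = 0 := by
        apply Finset.prod_eq_zero hp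
        rw [if_pos hpa]; ring
      rw [this, mul_zero]
  have step2 : ∀ (T : Finset ℕ), T ⊆ S → ∀ a,
      (∏ p ∈ T, (if p ∣ a then (-1:ℚ) else 0)) = if (∏ p ∈ T, p) ∣ a then (-1:ℚ)^T.card else 0 := by
    intro T hT a
    by_cases h : (∏ p ∈ T, p) ∣ a
    · rw [if_pos h]
      rw [Finset.prod_congr rfl (fun p hp => if_pos (dvd_trans (Finset.dvd_prod_of_mem _ hp) h))]
      rw [Finset.prod_const]
    · rw [if_neg h]
      have : ∃ p ∈ T, ¬ p ∣ a := by
        by_contra hc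
        push_neg at hc
        exact h (Finset.prod_primes_dvd a (fun p hp => (hS p (hT hp)).prime) hc)
      obtain ⟨p, hp, hpa⟩ := this
      exact Finset.prod_eq_zero hp (if_neg hpa)
  rw [Finset.sum_filter]
  calc ∑ a ∈ B, (if (∀ p ∈ S, ¬ p ∣ a) then f a else 0)
      = ∑ a ∈ B, f a * ∏ p ∈ S, ((if p ∣ a then (-1:ℚ) else 0) + 1) :=
        Finset.sum_congr rfl (fun a _ => step1 a)
    _ = ∑ a ∈ B, ∑ T ∈ S.powerset, f a * ((∏ p ∈ T, (if p ∣ a then (-1:ℚ) else 0)) * ∏ p ∈ S \ T, 1) := by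
        refine Finset.sum_congr rfl (fun a _ => ?_)
        rw [Finset.prod_add, Finset.mul_sum]
    _ = ∑ T ∈ S.powerset, ∑ a ∈ B, f a * ((∏ p ∈ T, (if p ∣ a then (-1:ℚ) else 0)) * ∏ p ∈ S \ T, 1) :=
        Finset.sum_comm
    _ = ∑ T ∈ S.powerset, (-1:ℚ)^T.card * ∑ a ∈ B.filter (fun a => (∏ p ∈ T, p) ∣ a), f a := by
        refine Finset.sum_congr rfl (fun T hT => ?_)
        rw [Finset.mem_powerset] at hT
        rw [Finset.sum_filter, Finset.mul_sum]
        refine Finset.sum_congr rfl (fun a _ => ?_)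
        rw [step2 T hT a, Finset.prod_const_one, mul_one]
        by_cases h : (∏ p ∈ T, p) ∣ a
        · rw [if_pos h, if_pos h]; ring
        · rw [if_neg h, if_neg h]; ring

lemma key_identity (fF fK : ℕ) [NeZero fF] [NeZero fK] (hK : 1 < fK) (hdvd : fK ∣ fF)
    (b : (ZMod fK)ˣ) :
    ∑ a ∈ Finset.univ.filter (fun a : (ZMod fF)ˣ => ZMod.unitsMap hdvd a = b),
        ((1:ℚ)/2 - (((a : ZMod fF)).val : ℚ) / (fF:ℚ)) =
    ∑ T ∈ (fF.primeFactors.filter fun p => ¬ p ∣ fK).powerset,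
        (-1:ℚ)^T.card *
          ((1:ℚ)/2 - ((((∏ p ∈ T, zunit fK p)⁻¹ * b : (ZMod fK)ˣ) : ZMod fK)).val / (fK:ℚ)) := by
  have hfK : 0 < fK := by omega
  have hfF : 0 < fF := Nat.pos_of_ne_zero (NeZero.ne fF)
  set S := fF.primeFactors.filter (fun p => ¬ p ∣ fK) with hS_def
  have hSprime : ∀ p ∈ S, Nat.Prime p := fun p hp =>
    Nat.prime_of_mem_primeFactors (Finset.mem_filter.mp hp).1
  set bv := ((b : ZMod fK)).val with hbv_def
  have hbv_cop : Nat.Coprime bv fK := ZMod.val_coe_unit_coprime b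
  -- coprimality from the two filter conditions
  have cop_of : ∀ a : ℕ, a % fK = bv → (∀ p ∈ S, ¬ p ∣ a) → Nat.Coprime a fF := by
    intro a hmod hnd
    by_contra hc
    obtain ⟨p, hp, hpa, hpf⟩ := Nat.Prime.not_coprime_iff_dvd.mp hc
    by_cases hpk : p ∣ fK
    · have h1 : p ∣ a % fK := (Nat.dvd_mod_iff hpk).mpr hpa
      rw [hmod] at h1
      have := Nat.dvd_gcd h1 hpk
      rw [Nat.Coprime] at hbv_cop
      rw [hbv_cop] at this
      exact hp.one_lt.ne' (Nat.dvd_one.mp this)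
    · have hpS : p ∈ S := by
        rw [hS_def, Finset.mem_filter, Nat.mem_primeFactors]
        exact ⟨⟨hp, hpf, NeZero.ne fF⟩, hpk⟩
      exact hnd p hpS hpa
  have hmap : ∀ u : (ZMod fF)ˣ, ((ZMod.unitsMap hdvd u : (ZMod fK)ˣ) : ZMod fK)
      = (((u : ZMod fF).val : ℕ) : ZMod fK) := by
    intro u
    rw [ZMod.unitsMap_def]
    simp only [Units.coe_map, MonoidHom.coe_coe]
    conv_lhs => rw [← ZMod.natCast_rightInverse (u : ZMod fF)]
    rw [map_natCast]
  -- Step A : rewrite LHS as a sum over naturals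
  have stepA : ∑ a ∈ Finset.univ.filter (fun a : (ZMod fF)ˣ => ZMod.unitsMap hdvd a = b),
        ((1:ℚ)/2 - (((a : ZMod fF)).val : ℚ) / (fF:ℚ))
      = ∑ a ∈ (Finset.range fF).filter (fun a => a % fK = bv ∧ ∀ p ∈ S, ¬ p ∣ a),
        ((1:ℚ)/2 - (a:ℚ)/(fF:ℚ)) := by
    refine Finset.sum_bij' (fun (u : (ZMod fF)ˣ) _ => (u : ZMod fF).val)
      (fun a ha => ZMod.unitOfCoprime a (by
        simp only [Finset.mem_filter, Finset.mem_range] at ha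
        exact cop_of a ha.2.1 ha.2.2)) ?_ ?_ ?_ ?_ ?_
    · intro u hu
      simp only [Finset.mem_filter, Finset.mem_univ, true_and] at hu
      simp only [Finset.mem_filter, Finset.mem_range]
      refine ⟨ZMod.val_lt _, ?_, ?_⟩
      · have := congrArg (fun x : (ZMod fK)ˣ => ((x : ZMod fK)).val) hu
        rw [hmap u, ZMod.val_natCast] at this
        exact this
      · intro p hp hpu
        have hcop := ZMod.val_coe_unit_coprime u
        have hpf : p ∣ fF := Nat.dvd_of_mem_primeFactors (Finset.mem_filter.mp hp).1
        have := Nat.dvd_gcd hpu hpf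
        rw [Nat.Coprime] at hcop
        rw [hcop] at this
        exact (hSprime p hp).one_lt.ne' (Nat.dvd_one.mp this)
    · intro a ha
      simp only [Finset.mem_filter, Finset.mem_range] at ha
      simp only [Finset.mem_filter, Finset.mem_univ, true_and]
      apply Units.ext
      rw [hmap]
      have h1 : ((ZMod.unitOfCoprime a (cop_of a ha.2.1 ha.2.2) : ZMod fF)).val = a := by
        rw [ZMod.coe_unitOfCoprime, ZMod.val_natCast, Nat.mod_eq_of_lt ha.1]
      rw [h1]
      apply ZMod.val_injective
      rw [ZMod.val_natCast, ha.2.1]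
    · intro u hu
      apply Units.ext
      rw [ZMod.coe_unitOfCoprime]
      exact ZMod.natCast_rightInverse _
    · intro a ha
      simp only [Finset.mem_filter, Finset.mem_range] at ha
      simp only [ZMod.coe_unitOfCoprime, ZMod.val_natCast]
      exact Nat.mod_eq_of_lt ha.1
    · intro u hu
      rfl
  rw [stepA]
  have hff : (Finset.range fF).filter (fun a => a % fK = bv ∧ ∀ p ∈ S, ¬ p ∣ a)
      = ((Finset.range fF).filter (fun a => a % fK = bv)).filter (fun a => ∀ p ∈ S, ¬ p ∣ a) := by
    rw [Finset.filter_filter]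
  rw [hff, my_incl_excl _ S hSprime]
  refine Finset.sum_congr rfl (fun T hT => ?_)
  rw [Finset.mem_powerset] at hT
  congr 1
  -- now the inner sum over multiples
  set m := ∏ p ∈ T, p with hm_def
  set c := ((((∏ p ∈ T, zunit fK p)⁻¹ * b : (ZMod fK)ˣ) : ZMod fK)).val with hc_def
  have hTprime : ∀ p ∈ T, Nat.Prime p := fun p hp => hSprime p (hT hp)
  have hm : 0 < m := Finset.prod_pos (fun p hp => (hTprime p hp).pos)
  have hcopT : ∀ p ∈ T, Nat.Coprime p fK := fun p hp =>
    (Nat.Prime.coprime_iff_not_dvd (hTprime p hp)).mpr (Finset.mem_filter.mp (hT hp)).2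
  have hcop : Nat.Coprime m fK := Nat.Coprime.prod_left (fun p hp => hcopT p hp)
  have hmF : m ∣ fF := Finset.prod_primes_dvd fF
      (fun p hp => (hTprime p hp).prime)
      (fun p hp => Nat.dvd_of_mem_primeFactors (Finset.mem_filter.mp (hT hp)).1)
  have hmkF : m * fK ∣ fF := Nat.Coprime.mul_dvd_of_dvd_of_dvd hcop hmF hdvd
  have hmcast : ((m : ℕ) : ZMod fK) = ((∏ p ∈ T, zunit fK p : (ZMod fK)ˣ) : ZMod fK) := by
    rw [hm_def]
    push_cast
    refine Finset.prod_congr rfl (fun p hp => ?_)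
    rw [zunit, dif_pos (hcopT p hp), ZMod.coe_unitOfCoprime]
  have hcb : (m * c) % fK = bv := by
    have h1 : ((m * c : ℕ) : ZMod fK) = (b : ZMod fK) := by
      push_cast
      rw [hmcast, hc_def, ZMod.natCast_val, ZMod.cast_id]
      rw [Units.val_mul, ← mul_assoc, ← Units.val_mul, mul_inv_cancel, Units.val_one, one_mul]
    have := congrArg ZMod.val h1
    rw [ZMod.val_natCast] at this
    exact this
  rw [← my_inner_sum fF fK m c bv hm hfK hmkF hcop (ZMod.val_lt _) hcb, Finset.filter_filter]

/-- Restriction formula for Stickelberger elements: if `K ⊆ F` (`K ≠ ℚ`), then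
`N_{F/K}(θ_F) = ∏_{p ∣ f_F, p ∤ f_K} (1 - σ_{K,p}⁻¹) · θ_K`, the norm map `N_{F/K}` being
induced by the restriction `π : Gal(F/ℚ) →* Gal(K/ℚ)` of automorphisms. -/
theorem stickelberger_restriction (fF fK : ℕ) [NeZero fF] [NeZero fK] (hK : 1 < fK)
    {GF GK : Type*} [CommGroup GF] [CommGroup GK]
    (σF : (ZMod fF)ˣ →* GF) (σK : (ZMod fK)ˣ →* GK)
    (hcondF : IsConductor fF σF) (hcondK : IsConductor fK σK)
    (hdvd : fK ∣ fF) (π : GF →* GK) (hπ : Function.Surjective π)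
    (hcomp : ∀ a : (ZMod fF)ˣ, π (σF a) = σK (ZMod.unitsMap hdvd a)) :
    MonoidAlgebra.mapDomainRingHom ℚ π (stickelberger fF σF) =
      (∏ p ∈ fF.primeFactors.filter fun p => ¬ p ∣ fK,
        ((1 : MonoidAlgebra ℚ GK) - MonoidAlgebra.single (frob fK σK p)⁻¹ 1)) *
        stickelberger fK σK := by
  classical
  set S := fF.primeFactors.filter fun p => ¬ p ∣ fK with hS_def
  -- LHS
  have hmapsingle : ∀ (g : GF) (c : ℚ),
      MonoidAlgebra.mapDomainRingHom ℚ π (MonoidAlgebra.single g c)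
        = MonoidAlgebra.single (π g) c := by
    intros g c
    simp [MonoidAlgebra.mapDomainRingHom, Finsupp.mapDomain_single]
  have hL : MonoidAlgebra.mapDomainRingHom ℚ π (stickelberger fF σF)
      = -∑ bb : (ZMod fK)ˣ, MonoidAlgebra.single ((σK bb)⁻¹)
          (∑ a ∈ Finset.univ.filter (fun a : (ZMod fF)ˣ => ZMod.unitsMap hdvd a = bb),
            ((1:ℚ)/2 - (((a : ZMod fF)).val : ℚ)/(fF:ℚ))) := by
    rw [stickelberger, map_neg, map_sum]
    congr 1
    rw [← Finset.sum_fiberwise Finset.univ (fun a : (ZMod fF)ˣ => ZMod.unitsMap hdvd a)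
      (fun a => MonoidAlgebra.mapDomainRingHom ℚ π
        (MonoidAlgebra.single ((σF a)⁻¹) ((1:ℚ)/2 - (((a : ZMod fF)).val : ℚ)/(fF:ℚ))))]
    refine Finset.sum_congr rfl fun bb _ => ?_
    refine (Finset.sum_congr rfl fun a ha => ?_).trans (map_sum (MonoidAlgebra.singleAddHom _) _ _).symm
    rw [hmapsingle, map_inv, hcomp, (Finset.mem_filter.mp ha).2]
    rfl
  -- frob = σK ∘ zunit
  have hfrob : ∀ p : ℕ, frob fK σK p = σK (zunit fK p) := by
    intro p
    rw [frob, zunit]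
    split
    · rfl
    · simp
  -- RHS
  have hprod : (∏ p ∈ S, ((1 : MonoidAlgebra ℚ GK) - MonoidAlgebra.single (frob fK σK p)⁻¹ 1))
      = ∑ T ∈ S.powerset,
          MonoidAlgebra.single ((σK (∏ p ∈ T, zunit fK p))⁻¹) ((-1:ℚ)^T.card) := by
    have h1 : ∀ p ∈ S, (1 : MonoidAlgebra ℚ GK) - MonoidAlgebra.single (frob fK σK p)⁻¹ 1
        = MonoidAlgebra.single ((σK (zunit fK p))⁻¹) (-1) + 1 := by
      intro p _
      rw [hfrob p, sub_eq_neg_add]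
      congr 1
      exact (MonoidAlgebra.single_neg _ _).symm
    rw [Finset.prod_congr rfl h1, Finset.prod_add]
    refine Finset.sum_congr rfl fun T hT => ?_
    rw [Finset.prod_const_one, mul_one, MonoidAlgebra.prod_single, Finset.prod_const]
    congr 1
    rw [map_prod]
    exact Finset.prod_inv_distrib _
  have hR : (∏ p ∈ S, ((1 : MonoidAlgebra ℚ GK) - MonoidAlgebra.single (frob fK σK p)⁻¹ 1))
        * stickelberger fK σK
      = -∑ bb : (ZMod fK)ˣ, MonoidAlgebra.single ((σK bb)⁻¹)
          (∑ T ∈ S.powerset, (-1:ℚ)^T.card *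
            ((1:ℚ)/2 - ((((∏ p ∈ T, zunit fK p)⁻¹ * bb : (ZMod fK)ˣ) : ZMod fK)).val / (fK:ℚ))) := by
    rw [hprod, stickelberger, mul_neg, Finset.sum_mul_sum]
    congr 1
    calc ∑ T ∈ S.powerset, ∑ j : (ZMod fK)ˣ,
            MonoidAlgebra.single ((σK (∏ p ∈ T, zunit fK p))⁻¹) ((-1:ℚ)^T.card) *
              MonoidAlgebra.single ((σK j)⁻¹) ((1:ℚ)/2 - (((j : ZMod fK)).val : ℚ)/(fK:ℚ))
        = ∑ T ∈ S.powerset, ∑ bb : (ZMod fK)ˣ,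
            MonoidAlgebra.single ((σK bb)⁻¹) ((-1:ℚ)^T.card *
              ((1:ℚ)/2 - ((((∏ p ∈ T, zunit fK p)⁻¹ * bb : (ZMod fK)ˣ) : ZMod fK)).val / (fK:ℚ))) := by
          refine Finset.sum_congr rfl fun T _ => ?_
          refine Fintype.sum_equiv (Equiv.mulLeft (∏ p ∈ T, zunit fK p)) _ _ fun j => ?_
          rw [MonoidAlgebra.single_mul_single]
          congr 1
          · rw [Equiv.coe_mulLeft, ← mul_inv, ← map_mul]
          · rw [Equiv.coe_mulLeft, inv_mul_cancel_left]
      _ = ∑ bb : (ZMod fK)ˣ, ∑ T ∈ S.powerset,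
            MonoidAlgebra.single ((σK bb)⁻¹) ((-1:ℚ)^T.card *
              ((1:ℚ)/2 - ((((∏ p ∈ T, zunit fK p)⁻¹ * bb : (ZMod fK)ˣ) : ZMod fK)).val / (fK:ℚ))) :=
          Finset.sum_comm
      _ = ∑ bb : (ZMod fK)ˣ, MonoidAlgebra.single ((σK bb)⁻¹)
            (∑ T ∈ S.powerset, (-1:ℚ)^T.card *
              ((1:ℚ)/2 - ((((∏ p ∈ T, zunit fK p)⁻¹ * bb : (ZMod fK)ˣ) : ZMod fK)).val / (fK:ℚ))) := by
          refine Finset.sum_congr rfl fun bb _ => ?_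
          exact (map_sum (MonoidAlgebra.singleAddHom _) _ _).symm
  rw [hL, hR]
  congr 1
  refine Finset.sum_congr rfl fun bb _ => ?_
  congr 1
  exact key_identity fF fK hK hdvd bb
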